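/- There exist constants C > 0 and K such that for every integer k ≥ K there is a finite vertex set V and a family E of k-element subsets of V with |E| ≤ 2^(k + C·(k·log₂ k)^(1/2)) such that for every coloring c : V → Bool there is an edge e ∈ E on which c is constant (i.e., the k-uniform hypergraph (V, E) is not two-colorable). -/

import Mathlib

open Finset Real


lemma eg_exp_two_lt_eight : Real.exp 2 < 8 := by
  have h := Real.exp_one_lt_d9
  have h2 : Real.exp 2 = Real.exp 1 * Real.exp 1 := by
    rw [← Real.exp_add]; norm_num
  nlinarith [Real.exp_pos 1]

lemma eg_pow_ratio {k : ℕ} (hk : 2 ≤ k) : (k : ℝ) ^ k ≤ 8 * ((k : ℝ) - 1) ^ k := by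
  have hk2 : (2 : ℝ) ≤ (k : ℝ) := by exact_mod_cast hk
  have hk1 : (1 : ℝ) ≤ (k : ℝ) - 1 := by linarith
  have hpos : (0 : ℝ) < (k : ℝ) - 1 := by linarith
  have hsplit : (k : ℝ) = ((k : ℝ) - 1) * (1 + 1 / ((k : ℝ) - 1)) := by
    field_simp; ring
  have h1 : (1 + 1 / ((k : ℝ) - 1)) ≤ Real.exp (1 / ((k : ℝ) - 1)) := by
    have := Real.add_one_le_exp (1 / ((k : ℝ) - 1)); linarith
  have h1pos : (0 : ℝ) ≤ 1 + 1 / ((k : ℝ) - 1) := by positivity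
  have h2 : (1 + 1 / ((k : ℝ) - 1)) ^ k ≤ Real.exp (1 / ((k : ℝ) - 1)) ^ k :=
    pow_le_pow_left₀ h1pos h1 k
  have h3 : Real.exp (1 / ((k : ℝ) - 1)) ^ k = Real.exp ((k : ℝ) * (1 / ((k : ℝ) - 1))) := by
    rw [← Real.exp_nat_mul]
  have h4 : (k : ℝ) * (1 / ((k : ℝ) - 1)) ≤ 2 := by
    rw [mul_one_div, div_le_iff₀ hpos]; linarith
  have h5 : Real.exp ((k : ℝ) * (1 / ((k : ℝ) - 1))) ≤ Real.exp 2 := Real.exp_le_exp.2 h4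
  have h6 : (1 + 1 / ((k : ℝ) - 1)) ^ k ≤ 8 := by
    have := eg_exp_two_lt_eight
    calc (1 + 1 / ((k : ℝ) - 1)) ^ k ≤ Real.exp (1 / ((k : ℝ) - 1)) ^ k := h2
      _ = Real.exp ((k : ℝ) * (1 / ((k : ℝ) - 1))) := h3
      _ ≤ Real.exp 2 := h5
      _ ≤ 8 := le_of_lt this
  calc (k : ℝ) ^ k = (((k : ℝ) - 1) * (1 + 1 / ((k : ℝ) - 1))) ^ k := by rw [← hsplit]
    _ = ((k : ℝ) - 1) ^ k * (1 + 1 / ((k : ℝ) - 1)) ^ k := mul_pow _ _ _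
    _ ≤ ((k : ℝ) - 1) ^ k * 8 := by
        apply mul_le_mul_of_nonneg_left h6 (by positivity)
    _ = 8 * ((k : ℝ) - 1) ^ k := mul_comm _ _

lemma eg_nat_ratio {k : ℕ} (hk : 2 ≤ k) : k ^ k ≤ 8 * (k - 1) ^ k := by
  have h := eg_pow_ratio hk
  have hc : ((k - 1 : ℕ) : ℝ) = (k : ℝ) - 1 := by
    have : 1 ≤ k := by omega
    push_cast [this]; ring
  exact_mod_cast hc ▸ h

lemma eg_desc_ratio {k : ℕ} (hk : 2 ≤ k) :
    (2 * k ^ 2).descFactorial k ≤ 2 ^ (k + 3) * (k ^ 2).descFactorial k := by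
  have h2 : (k ^ 2 + 1 - k) ^ k ≤ (k ^ 2).descFactorial k := by
    rw [Nat.descFactorial_eq_prod_range]
    have : (k ^ 2 + 1 - k) ^ (Finset.range k).card ≤ ∏ i ∈ Finset.range k, (k ^ 2 - i) := by
      apply Finset.pow_card_le_prod
      intro i hi
      simp only [Finset.mem_range] at hi
      omega
    simpa using this
  have h1 : (2 * k ^ 2).descFactorial k ≤ (2 * k ^ 2) ^ k := Nat.descFactorial_le_pow _ _
  have hmid : (2 * k ^ 2) ^ k ≤ 2 ^ (k + 3) * (k ^ 2 + 1 - k) ^ k := by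
    have hr := eg_nat_ratio hk
    have e1 : (2 * k ^ 2) ^ k = 2 ^ k * (k ^ k * k ^ k) := by
      rw [mul_pow, ← pow_mul]
      ring_nf
    have e2 : 2 ^ k * (k ^ k * k ^ k) ≤ 2 ^ k * (8 * (k - 1) ^ k * k ^ k) :=
      Nat.mul_le_mul_left _ (Nat.mul_le_mul_right _ hr)
    have e3 : 2 ^ k * (8 * (k - 1) ^ k * k ^ k) = 2 ^ (k + 3) * ((k - 1) * k) ^ k := by
      rw [mul_pow, pow_add]
      ring
    have e4 : ((k - 1) * k) ^ k ≤ (k ^ 2 + 1 - k) ^ k := by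
      apply Nat.pow_le_pow_left
      have h1 : (k - 1) * k = k ^ 2 - k := by
        rw [Nat.sub_mul, one_mul, pow_two]
      rw [h1]
      exact Nat.sub_le_sub_right (Nat.le_succ _) k
    calc (2 * k ^ 2) ^ k = 2 ^ k * (k ^ k * k ^ k) := e1
      _ ≤ 2 ^ k * (8 * (k - 1) ^ k * k ^ k) := e2
      _ = 2 ^ (k + 3) * ((k - 1) * k) ^ k := e3
      _ ≤ 2 ^ (k + 3) * (k ^ 2 + 1 - k) ^ k := Nat.mul_le_mul_left _ e4
  calc (2 * k ^ 2).descFactorial k ≤ (2 * k ^ 2) ^ k := h1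
    _ ≤ 2 ^ (k + 3) * (k ^ 2 + 1 - k) ^ k := hmid
    _ ≤ 2 ^ (k + 3) * (k ^ 2).descFactorial k := Nat.mul_le_mul_left _ h2

lemma eg_choose_ratio {k : ℕ} (hk : 2 ≤ k) :
    (2 * k ^ 2).choose k ≤ 2 ^ (k + 3) * (k ^ 2).choose k := by
  have hd := eg_desc_ratio hk
  rw [Nat.descFactorial_eq_factorial_mul_choose, Nat.descFactorial_eq_factorial_mul_choose] at hd
  have : Nat.factorial k * (2 * k ^ 2).choose k ≤ Nat.factorial k * (2 ^ (k + 3) * (k ^ 2).choose k) := by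
    calc Nat.factorial k * (2 * k ^ 2).choose k ≤ 2 ^ (k + 3) * (Nat.factorial k * (k ^ 2).choose k) := hd
      _ = Nat.factorial k * (2 ^ (k + 3) * (k ^ 2).choose k) := by ring
  exact Nat.le_of_mul_le_mul_left this (Nat.factorial_pos k)


lemma eg_one_sub_lt {x : ℝ} (hx : 0 < x) : 1 - x < (2 : ℝ) ^ (-x) := by
  have hlog : (0 : ℝ) < Real.log 2 := Real.log_pos (by norm_num)
  have hlog1 : Real.log 2 < 1 := by
    have := Real.log_two_lt_d9; linarith
  have h1 : (2 : ℝ) ^ (-x) = Real.exp (-x * Real.log 2) := by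
    rw [Real.rpow_def_of_pos (by norm_num : (0:ℝ) < 2)]
    ring_nf
  have hne : -x * Real.log 2 ≠ 0 := by
    apply ne_of_lt; exact mul_neg_of_neg_of_pos (by linarith) hlog
  have h2 : -x * Real.log 2 + 1 < Real.exp (-x * Real.log 2) := Real.add_one_lt_exp hne
  have h3 : 1 - x ≤ -x * Real.log 2 + 1 := by nlinarith
  rw [h1]; linarith

lemma eg_key_lt {k : ℕ} (hk : 2 ≤ k) :
    2 ^ (2 * k ^ 2) * ((2 * k ^ 2).choose k - (k ^ 2).choose k) ^ (2 * k ^ 2 * 2 ^ (k + 3))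
      < (2 * k ^ 2).choose k ^ (2 * k ^ 2 * 2 ^ (k + 3)) := by
  have hkn : k ≤ k ^ 2 := Nat.le_self_pow two_ne_zero k
  have hkn2 : k ≤ 2 * k ^ 2 := le_trans hkn (Nat.le_mul_of_pos_left _ (by norm_num))
  set n := 2 * k ^ 2 with hn
  set T := n.choose k with hTdef
  set M := (k ^ 2).choose k with hMdef
  set m := n * 2 ^ (k + 3) with hmdef
  have hMT : M ≤ T := Nat.choose_le_choose k (Nat.le_mul_of_pos_left _ (by norm_num))
  have hT0 : 0 < T := Nat.choose_pos hkn2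
  have hM0 : 0 < M := Nat.choose_pos hkn
  have hratio : T ≤ 2 ^ (k + 3) * M := eg_choose_ratio hk
  rw [← Nat.cast_lt (α := ℝ)]
  push_cast [Nat.cast_sub hMT]
  set P : ℝ := (2 : ℝ) ^ (k + 3) with hPdef
  have hP1 : (1 : ℝ) ≤ P := one_le_pow₀ one_le_two
  have hP0 : (0 : ℝ) < P := by positivity
  have hxpos : 0 < 1 / P := by positivity
  have hTR : (0:ℝ) < (T:ℝ) := by exact_mod_cast hT0
  have hratR : (T:ℝ) ≤ P * M := by
    rw [hPdef]; exact_mod_cast hratio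
  have h1 : (T : ℝ) - M ≤ (T:ℝ) * (1 - 1/P) := by
    have hd : (T:ℝ)/P ≤ M := by
      rw [div_le_iff₀ hP0]; nlinarith
    have he : (T:ℝ) * (1 - 1/P) = T - T/P := by field_simp
    linarith
  have hTM0 : (0:ℝ) ≤ (T:ℝ) - M := by
    have : (M:ℝ) ≤ T := by exact_mod_cast hMT
    linarith
  have h2 : ((T:ℝ) - M)^m ≤ ((T:ℝ) * (1 - 1/P))^m := pow_le_pow_left₀ hTM0 h1 m
  have h1P : (0:ℝ) ≤ 1 - 1/P := by
    have : 1/P ≤ 1 := by rw [div_le_one hP0]; exact hP1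
    linarith
  have h3 : (1 - 1/P) < (2:ℝ) ^ (-(1/P)) := eg_one_sub_lt hxpos
  have hm0 : m ≠ 0 := by
    have hk0 : 0 < k := by omega
    rw [hmdef, hn]
    positivity
  have h4 : (1 - 1/P)^m < ((2:ℝ) ^ (-(1/P)))^m := pow_lt_pow_left₀ h3 h1P hm0
  have h5 : ((2:ℝ) ^ (-(1/P)))^m = ((2:ℝ) ^ n)⁻¹ := by
    rw [← Real.rpow_natCast ((2:ℝ) ^ (-(1/P))) m, ← Real.rpow_mul (by norm_num)]
    have hmP : (m:ℝ) = (n:ℝ) * P := by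
      rw [hmdef, hPdef]; push_cast; ring
    rw [hmP]
    have : -(1/P) * ((n:ℝ) * P) = -(n:ℝ) := by field_simp
    rw [this, Real.rpow_neg (by norm_num), Real.rpow_natCast]
  have h2n : (0:ℝ) < (2:ℝ)^n := by positivity
  have hfin : ((T:ℝ) - M)^m < (T:ℝ)^m * ((2:ℝ)^n)⁻¹ := by
    calc ((T:ℝ) - M)^m ≤ ((T:ℝ) * (1 - 1/P))^m := h2
      _ = (T:ℝ)^m * (1 - 1/P)^m := mul_pow _ _ _
      _ < (T:ℝ)^m * ((2:ℝ)^n)⁻¹ := by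
          rw [← h5]
          exact mul_lt_mul_of_pos_left h4 (by positivity)
  calc (2:ℝ)^n * ((T:ℝ) - M)^m < (2:ℝ)^n * ((T:ℝ)^m * ((2:ℝ)^n)⁻¹) :=
        mul_lt_mul_of_pos_left hfin h2n
    _ = (T:ℝ)^m := by field_simp

lemma eg_card_bound {k : ℕ} (hk : 16 ≤ k) :
    ((2 * k ^ 2 * 2 ^ (k + 3) : ℕ) : ℝ)
      ≤ (2 : ℝ) ^ ((k : ℝ) + 10 * Real.sqrt ((k : ℝ) * Real.logb 2 (k : ℝ))) := by
  have hkR : (16 : ℝ) ≤ (k : ℝ) := by exact_mod_cast hk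
  have hk0 : (0 : ℝ) < (k : ℝ) := by linarith
  set L := Real.logb 2 (k : ℝ) with hL
  have hb : (1 : ℝ) < 2 := one_lt_two
  have hL4 : (4 : ℝ) ≤ L := by
    rw [hL, Real.le_logb_iff_rpow_le hb hk0]
    have : (2 : ℝ) ^ (4 : ℝ) = 16 := by
      rw [show (4:ℝ) = ((4:ℕ):ℝ) by norm_num, Real.rpow_natCast]; norm_num
    rw [this]; exact hkR
  have hLk : L ≤ (k : ℝ) := by
    rw [hL, Real.logb_le_iff_le_rpow hb hk0]
    have h2k : (k : ℝ) < ((2 ^ k : ℕ) : ℝ) := by exact_mod_cast (Nat.lt_two_pow_self (n := k))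
    have : ((2 ^ k : ℕ) : ℝ) = (2 : ℝ) ^ ((k : ℕ) : ℝ) := by
      rw [Real.rpow_natCast]; push_cast; ring
    linarith [this ▸ h2k]
  have hL0 : (0 : ℝ) ≤ L := by linarith
  have hs : L ≤ Real.sqrt ((k : ℝ) * L) := by
    have h1 : L = Real.sqrt (L * L) := (Real.sqrt_mul_self hL0).symm
    rw [h1]
    apply Real.sqrt_le_sqrt
    nlinarith
  have hexp : (k : ℝ) + 4 + 2 * L ≤ (k : ℝ) + 10 * Real.sqrt ((k : ℝ) * L) := by
    nlinarith [Real.sqrt_nonneg ((k : ℝ) * L)]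
  have heq : ((2 * k ^ 2 * 2 ^ (k + 3) : ℕ) : ℝ) = (2 : ℝ) ^ ((k : ℝ) + 4 + 2 * L) := by
    rw [show (k : ℝ) + 4 + 2 * L = (((k + 4 : ℕ) : ℝ)) + L * 2 by push_cast; ring]
    rw [Real.rpow_add (by norm_num), Real.rpow_natCast]
    rw [show L * 2 = L * ((2:ℕ):ℝ) by norm_num, Real.rpow_mul_natCast (by norm_num)]
    rw [hL, Real.rpow_logb (by norm_num) (by norm_num) hk0]
    push_cast
    ring
  rw [heq]
  exact Real.rpow_le_rpow_of_exponent_le (by norm_num) hexp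

/-- There exist constants `C > 0` and `K` such that for every integer `k ≥ K` there is a
finite vertex set (here `Fin n`) and a family `E` of `k`-element subsets with
`|E| ≤ 2 ^ (k + C * (k * log₂ k) ^ (1/2))` such that every coloring `c : V → Bool`
has a monochromatic edge, i.e. the `k`-uniform hypergraph is not two-colorable. -/


theorem erdos_gebauer_improved :
    ∃ C : ℝ, 0 < C ∧ ∃ K : ℕ, ∀ k : ℕ, K ≤ k →
      ∃ (n : ℕ) (E : Finset (Finset (Fin n))),
        (∀ e ∈ E, e.card = k) ∧
        (E.card : ℝ) ≤ (2 : ℝ) ^ ((k : ℝ) + C * Real.sqrt ((k : ℝ) * Real.logb 2 (k : ℝ))) ∧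
        ∀ c : Fin n → Bool, ∃ e ∈ E, ∃ b : Bool, ∀ v ∈ e, c v = b := by
  classical
  refine ⟨10, by norm_num, 16, ?_⟩
  intro k hk
  have hk2 : 2 ≤ k := by omega
  set n := 2 * k ^ 2 with hn
  set m := n * 2 ^ (k + 3) with hm
  set S : Finset (Finset (Fin n)) := Finset.powersetCard k (univ : Finset (Fin n)) with hS
  have hScard : S.card = n.choose k := by
    rw [hS, Finset.card_powersetCard, Finset.card_univ, Fintype.card_fin]
  set M := (k ^ 2).choose k with hM
  let bad : (Fin n → Bool) → Finset (Finset (Fin n)) :=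
    fun c => S.filter (fun e => ¬ ∃ b, ∀ v ∈ e, c v = b)
  have hbad : ∀ c, (bad c).card ≤ n.choose k - M := by
    intro c
    have hsum : (univ.filter (fun v => c v = true)).card
        + (univ.filter (fun v => ¬ (c v = true))).card = n := by
      rw [Finset.card_filter_add_card_filter_not, Finset.card_univ, Fintype.card_fin]
    obtain ⟨b, D, hD, hDcard⟩ : ∃ (b : Bool) (D : Finset (Fin n)),
        (∀ v ∈ D, c v = b) ∧ k ^ 2 ≤ D.card := by
      by_cases hA : k ^ 2 ≤ (univ.filter (fun v => c v = true)).card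
      · exact ⟨true, _, fun v hv => (Finset.mem_filter.1 hv).2, hA⟩
      · refine ⟨false, univ.filter (fun v => ¬ (c v = true)), ?_, ?_⟩
        · intro v hv
          have h := (Finset.mem_filter.1 hv).2
          simp only [Bool.not_eq_true] at h
          exact h
        · have h2 := hsum.trans hn
          have h3 := lt_of_not_ge hA
          linarith
    have hsub : Finset.powersetCard k D ⊆ S.filter (fun e => ∃ b, ∀ v ∈ e, c v = b) := by
      intro e he
      rw [Finset.mem_powersetCard] at he
      refine Finset.mem_filter.2 ⟨?_, ⟨b, fun v hv => hD v (he.1 hv)⟩⟩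
      rw [hS, Finset.mem_powersetCard]
      exact ⟨Finset.subset_univ _, he.2⟩
    have hmcount : M ≤ (S.filter (fun e => ∃ b, ∀ v ∈ e, c v = b)).card := by
      calc M ≤ D.card.choose k := Nat.choose_le_choose k hDcard
        _ = (Finset.powersetCard k D).card := (Finset.card_powersetCard _ _).symm
        _ ≤ _ := Finset.card_le_card hsub
    have hsplit : (S.filter (fun e => ∃ b, ∀ v ∈ e, c v = b)).card + (bad c).card
        = n.choose k := by
      rw [← hScard]
      exact Finset.card_filter_add_card_filter_not _
    omega
  have hkey := eg_key_lt hk2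
  have hcardlt : ((univ : Finset (Fin n → Bool)).biUnion
        (fun c => Fintype.piFinset (fun _ : Fin m => bad c))).card
      < (Fintype.piFinset (fun _ : Fin m => S)).card := by
    calc ((univ : Finset (Fin n → Bool)).biUnion
          (fun c => Fintype.piFinset (fun _ : Fin m => bad c))).card
        ≤ ∑ c : Fin n → Bool, (Fintype.piFinset (fun _ : Fin m => bad c)).card :=
          Finset.card_biUnion_le
      _ ≤ ∑ _c : Fin n → Bool, (n.choose k - M) ^ m := by
          apply Finset.sum_le_sum
          intro c _
          rw [Fintype.card_piFinset_const]
          exact Nat.pow_le_pow_left (hbad c) m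
      _ = 2 ^ n * (n.choose k - M) ^ m := by
          rw [Finset.sum_const, Finset.card_univ]
          simp [Fintype.card_fun]
      _ < (n.choose k) ^ m := hkey
      _ = (Fintype.piFinset (fun _ : Fin m => S)).card := by
          rw [Fintype.card_piFinset_const, hScard]
  obtain ⟨f, hfS, hfbad⟩ := Finset.not_subset.1
    (fun hsub => absurd (Finset.card_le_card hsub) (not_le.2 hcardlt))
  rw [Fintype.mem_piFinset] at hfS
  refine ⟨n, Finset.image f univ, ?_, ?_, ?_⟩
  · intro e he
    obtain ⟨i, _, rfl⟩ := Finset.mem_image.1 he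
    have h := hfS i
    rw [hS, Finset.mem_powersetCard] at h
    exact h.2
  · calc ((Finset.image f univ).card : ℝ) ≤ ((univ : Finset (Fin m)).card : ℝ) := by
          exact_mod_cast Finset.card_image_le
      _ = (m : ℝ) := by rw [Finset.card_univ, Fintype.card_fin]
      _ ≤ _ := by rw [hm, hn]; exact eg_card_bound hk
  · intro c
    have hnot : f ∉ Fintype.piFinset (fun _ : Fin m => bad c) := fun h =>
      hfbad (Finset.mem_biUnion.2 ⟨c, Finset.mem_univ _, h⟩)
    rw [Fintype.mem_piFinset] at hnot
    push_neg at hnot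
    obtain ⟨i, hi⟩ := hnot
    refine ⟨f i, Finset.mem_image_of_mem f (Finset.mem_univ i), ?_⟩
    have hiS := hfS i
    by_contra hcon
    exact hi (Finset.mem_filter.2 ⟨hiS, hcon⟩)
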